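/- Let α be a nonempty finite type and p : α → ℝ a probability vector. Let f, g : α → ℝ with E_p[f] = 0, and for γ ∈ ℝ let q_γ be the exponential tilt of p by γ·(f+g). If V := Var_p[g] + E_p[f·g] > 0, then there exists γ₀ > 0 such that for all γ with 0 < γ ≤ γ₀, ∑_a q_γ(a) · g a − E_p[g] ≥ (γ/2) · V. -/

import Mathlib

/-- If `V := Var_p[g] + E_p[f·g] > 0` (with `E_p[f] = 0`), then there is
`γ₀ > 0` such that for all `0 < γ ≤ γ₀`, the expected value of `g` under the exponential
tilt of `p` by `γ·(f+g)` exceeds `E_p[g]` by at least `(γ/2)·V`. -/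
theorem tilt_improvement {α : Type*} [Fintype α] [Nonempty α]
    (p : α → ℝ) (hp : ∀ a, 0 ≤ p a) (hp1 : ∑ a, p a = 1)
    (f g : α → ℝ) (hf : ∑ a, p a * f a = 0)
    (hV : 0 < (∑ a, p a * (g a - ∑ b, p b * g b) ^ 2) + ∑ a, p a * (f a * g a)) :
    ∃ γ₀ > (0 : ℝ), ∀ γ : ℝ, 0 < γ → γ ≤ γ₀ →
      (∑ a, (p a * Real.exp (γ * (f a + g a)) /
          (∑ b, p b * Real.exp (γ * (f b + g b)))) * g a) - (∑ a, p a * g a)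
        ≥ (γ / 2) * ((∑ a, p a * (g a - ∑ b, p b * g b) ^ 2) + ∑ a, p a * (f a * g a)) := by
  set c : ℝ := ∑ b, p b * g b with hc
  set V : ℝ := (∑ a, p a * (g a - c) ^ 2) + ∑ a, p a * (f a * g a) with hVdef
  set G : ℝ → ℝ := fun γ => ∑ a, p a * Real.exp (γ * (f a + g a)) * (g a - c - γ * (V / 2))
    with hGdef
  set G' : ℝ → ℝ := fun γ => ∑ a,
      (p a * ((f a + g a) * Real.exp (γ * (f a + g a))) * (g a - c - γ * (V / 2))
        + p a * Real.exp (γ * (f a + g a)) * (-(V / 2))) with hG'def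
  -- derivative of G
  have hderiv : ∀ γ : ℝ, HasDerivAt G (G' γ) γ := by
    intro γ
    apply HasDerivAt.fun_sum
    intro a _
    have he : HasDerivAt (fun γ : ℝ => Real.exp (γ * (f a + g a)))
        ((f a + g a) * Real.exp (γ * (f a + g a))) γ := by
      simpa [mul_comm] using ((hasDerivAt_id γ).mul_const (f a + g a)).exp
    have hv : HasDerivAt (fun γ : ℝ => g a - c - γ * (V / 2)) (-(V / 2)) γ := by
      simpa using ((hasDerivAt_id γ).mul_const (V / 2)).const_sub (g a - c)
    have := (he.const_mul (p a)).mul hv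
    exact this
  -- key covariance identity
  have hcov : ∑ a, p a * ((f a + g a) * (g a - c)) = V := by
    have expand : ∀ a, p a * ((f a + g a) * (g a - c))
        = (p a * (g a - c) ^ 2 + p a * (f a * g a))
          + (c * (p a * g a) - c ^ 2 * p a - c * (p a * f a)) := by
      intro a; ring
    rw [Finset.sum_congr rfl fun a _ => expand a]
    rw [Finset.sum_add_distrib, Finset.sum_add_distrib, Finset.sum_sub_distrib,
      Finset.sum_sub_distrib, ← Finset.mul_sum, ← Finset.mul_sum, ← Finset.mul_sum,
      hp1, hf, ← hc]
    ring
  have hG'0 : G' 0 = V / 2 := by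
    have : G' 0 = ∑ a, (p a * ((f a + g a) * (g a - c)) + p a * (-(V / 2))) := by
      rw [hG'def]
      refine Finset.sum_congr rfl fun a _ => ?_
      simp only [zero_mul, Real.exp_zero, sub_zero, mul_one]
      ring
    rw [this, Finset.sum_add_distrib, hcov, ← Finset.sum_mul, hp1]
    ring
  have hG0 : G 0 = 0 := by
    have : G 0 = ∑ a, (p a * g a - c * p a) := by
      rw [hGdef]
      refine Finset.sum_congr rfl fun a _ => ?_
      simp only [zero_mul, Real.exp_zero, sub_zero, mul_one]
      ring
    rw [this, Finset.sum_sub_distrib, ← Finset.mul_sum, hp1, ← hc]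
    ring
  -- continuity of G'
  have hcont : Continuous G' := by
    apply continuous_finset_sum
    intro a _
    fun_prop
  have hevent : ∀ᶠ γ in nhds (0 : ℝ), 0 < G' γ := by
    have h0 : (0 : ℝ) < G' 0 := by rw [hG'0]; linarith
    exact hcont.continuousAt.eventually (eventually_gt_nhds h0)
  obtain ⟨ε, hε, hball⟩ := Metric.eventually_nhds_iff.mp hevent
  refine ⟨ε / 2, by linarith, ?_⟩
  intro γ hγ0 hγε
  have hball' : ∀ x : ℝ, 0 ≤ x → x ≤ ε / 2 → 0 < G' x := by
    intro x hx1 hx2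
    apply hball
    rw [Real.dist_eq, sub_zero, abs_of_nonneg hx1]
    linarith
  -- strict monotonicity on [0, ε/2]
  have hmono : StrictMonoOn G (Set.Icc 0 (ε / 2)) := by
    apply strictMonoOn_of_deriv_pos (convex_Icc 0 (ε / 2))
    · exact fun x _ => (hderiv x).continuousAt.continuousWithinAt
    · intro x hx
      rw [interior_Icc] at hx
      rw [(hderiv x).deriv]
      exact hball' x hx.1.le hx.2.le
  have hGpos : 0 < G γ := by
    have := hmono (Set.left_mem_Icc.mpr (by linarith)) ⟨hγ0.le, hγε⟩ hγ0
    rwa [hG0] at this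
  -- denominator positive
  have hDpos : 0 < ∑ b, p b * Real.exp (γ * (f b + g b)) := by
    obtain ⟨a0, ha0⟩ : ∃ a0, 0 < p a0 := by
      by_contra hcon
      push_neg at hcon
      have : ∑ a, p a = 0 := Finset.sum_eq_zero fun a _ => le_antisymm (hcon a) (hp a)
      rw [hp1] at this; norm_num at this
    exact Finset.sum_pos' (fun b _ => mul_nonneg (hp b) (Real.exp_pos _).le)
      ⟨a0, Finset.mem_univ a0, mul_pos ha0 (Real.exp_pos _)⟩
  set D : ℝ := ∑ b, p b * Real.exp (γ * (f b + g b)) with hD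
  have hsum : (∑ a, (p a * Real.exp (γ * (f a + g a)) / D) * g a)
      = (∑ a, p a * Real.exp (γ * (f a + g a)) * g a) / D := by
    rw [Finset.sum_div]
    exact Finset.sum_congr rfl fun a _ => by ring
  rw [hsum, ge_iff_le, le_sub_iff_add_le, le_div_iff₀ hDpos]
  -- expand G γ
  have hGeq : G γ = (∑ a, p a * Real.exp (γ * (f a + g a)) * g a) - (γ * (V / 2) + c) * D := by
    rw [hGdef]
    simp only [hD, Finset.mul_sum]
    rw [← Finset.sum_sub_distrib]
    exact Finset.sum_congr rfl fun a _ => by ring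
  nlinarith [hGpos, hGeq]
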